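/- arXiv:2311.03154 — 4 statements merged into one kernel-verified Lean document; each statement's English description precedes it below -/
import Mathlib

section
/- Let h : ℝ^d → ℝ be differentiable, L-smooth and μ-strongly convex with 0 ≤ μ ≤ L. Then for all x, y, z ∈ ℝ^d: ⟨∇h(x), z − y⟩ ≥ h(z) − h(y) + (μ/4)·‖y − z‖² − L·‖z − x‖². -/
open scoped RealInnerProductSpace
open Set

/-- Derivative of a function along a line, expressed via the gradient. -/
private lemma line_deriv {d : ℕ} (h : EuclideanSpace ℝ (Fin d) → ℝ)
    (a u : EuclideanSpace ℝ (Fin d)) (t₀ : ℝ) (g' : EuclideanSpace ℝ (Fin d))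
    (hg' : HasGradientAt h g' (a + t₀ • u)) :
    HasDerivAt (fun t : ℝ => h (a + t • u)) ⟪g', u⟫ t₀ := by
  have hf := hasGradientAt_iff_hasFDerivAt.mp hg'
  have hline : HasDerivAt (fun t : ℝ => a + t • u) u t₀ := by
    simpa using ((hasDerivAt_id t₀).smul_const u).const_add a
  have := hf.comp_hasDerivAt t₀ hline
  simp [InnerProductSpace.toDual_apply_apply] at this
  exact this

/-- Strong convexity lower bound via the gradient. -/
private lemma sc_ineq {d : ℕ} (h : EuclideanSpace ℝ (Fin d) → ℝ) {μ : ℝ}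
    (hdiff : Differentiable ℝ h)
    (hsc : ConvexOn ℝ Set.univ (fun x => h x - μ / 2 * ‖x‖ ^ 2))
    (a b : EuclideanSpace ℝ (Fin d)) :
    h a + ⟪gradient h a, b - a⟫ + μ / 2 * ‖b - a‖ ^ 2 ≤ h b := by
  set u := b - a with hu
  set φ : ℝ → ℝ := fun t => h (a + t • u) - μ / 2 * ‖a + t • u‖ ^ 2 with hφ
  have hφconv : ConvexOn ℝ Set.univ φ := by
    have h2 := hsc.comp_affineMap (AffineMap.lineMap a b)
    have heq : ((fun x => h x - μ / 2 * ‖x‖ ^ 2) ∘ (AffineMap.lineMap a b)) = φ := by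
      funext t
      have hl : (AffineMap.lineMap a b) t = a + t • u := by
        simp [AffineMap.lineMap_apply_module', hu, add_comm]
      simp [Function.comp, hl, hφ]
    rw [heq] at h2
    simpa using h2
  set p : ℝ → ℝ := fun t => μ / 2 * ‖a‖ ^ 2 + (μ * ⟪a, u⟫) * t + (μ / 2 * ‖u‖ ^ 2) * t ^ 2
    with hp
  have hpe : ∀ t : ℝ, μ / 2 * ‖a + t • u‖ ^ 2 = p t := by
    intro t
    rw [hp]
    rw [norm_add_sq_real]
    have h1 : ⟪a, t • u⟫ = t * ⟪a, u⟫ := real_inner_smul_right a u t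
    have h2 : ‖t • u‖ ^ 2 = t ^ 2 * ‖u‖ ^ 2 := by
      rw [norm_smul]; simp [mul_pow, sq_abs]
    rw [h1, h2]; ring
  have hφe : φ = fun t => h (a + t • u) - p t := by
    funext t; rw [hφ]; simp only [hpe t]
  have hpd : HasDerivAt p (μ * ⟪a, u⟫ + (μ / 2 * ‖u‖ ^ 2) * (2 * 0)) 0 := by
    have d1 : HasDerivAt (fun t : ℝ => μ / 2 * ‖a‖ ^ 2) 0 0 := hasDerivAt_const _ _
    have d2 : HasDerivAt (fun t : ℝ => (μ * ⟪a, u⟫) * t) (μ * ⟪a, u⟫) 0 := by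
      simpa using (hasDerivAt_id (0:ℝ)).const_mul (μ * ⟪a, u⟫)
    have d3 : HasDerivAt (fun t : ℝ => (μ / 2 * ‖u‖ ^ 2) * t ^ 2)
        ((μ / 2 * ‖u‖ ^ 2) * (2 * 0)) 0 := by
      have := (hasDerivAt_pow 2 (0:ℝ)).const_mul (μ / 2 * ‖u‖ ^ 2)
      simpa using this
    have hs := (d1.add d2).add d3
    simp at hs
    simp
    exact hs
  have hhd : HasDerivAt (fun t : ℝ => h (a + t • u)) ⟪gradient h a, u⟫ 0 := by
    have := line_deriv h a u 0 (gradient h a) (by simpa using (hdiff a).hasGradientAt)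
    exact this
  have hφd : HasDerivAt φ (⟪gradient h a, u⟫ - (μ * ⟪a, u⟫ + (μ / 2 * ‖u‖ ^ 2) * (2 * 0))) 0 := by
    rw [hφe]; exact hhd.sub hpd
  have hslope := hφconv.le_slope_of_hasDerivAt (mem_univ (0:ℝ)) (mem_univ (1:ℝ)) one_pos hφd
  have hslope1 : slope φ 0 1 = φ 1 - φ 0 := by
    rw [slope_def_field]; simp
  rw [hslope1] at hslope
  have hφ0 : φ 0 = h a - μ / 2 * ‖a‖ ^ 2 := by simp [hφ]
  have hφ1 : φ 1 = h b - μ / 2 * ‖b‖ ^ 2 := by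
    have hab : a + (1:ℝ) • u = b := by rw [one_smul, hu]; abel
    rw [hφ]; simp only [hab]
  rw [hφ0, hφ1] at hslope
  have e1 : ‖b - a‖ ^ 2 = ‖b‖ ^ 2 - 2 * ⟪b, a⟫ + ‖a‖ ^ 2 := norm_sub_sq_real b a
  have e2 : ⟪a, u⟫ = ⟪a, b⟫ - ‖a‖ ^ 2 := by
    rw [hu, inner_sub_right, real_inner_self_eq_norm_sq]
  have e3 : ⟪b, a⟫ = ⟪a, b⟫ := real_inner_comm a b
  rw [hu] at hslope ⊢
  rw [e2] at hslope
  simp only [mul_zero, add_zero] at hslope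
  rw [e1, e3]
  linarith [hslope]

/-- Descent lemma for `L`-smooth functions. -/
private lemma descent_lemma {d : ℕ} (h : EuclideanSpace ℝ (Fin d) → ℝ) {L : ℝ} (hL : 0 < L)
    (hdiff : Differentiable ℝ h)
    (hsmooth : ∀ x y, ‖gradient h x - gradient h y‖ ≤ L * ‖x - y‖)
    (x z : EuclideanSpace ℝ (Fin d)) :
    h z ≤ h x + ⟪gradient h x, z - x⟫ + L / 2 * ‖z - x‖ ^ 2 := by
  set u := z - x with hu
  set c : ℝ := ⟪gradient h x, u⟫ with hc
  set ψ : ℝ → ℝ := fun t => h (x + t • u) - t * c - L * ‖u‖ ^ 2 * t ^ 2 / 2 with hψ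
  have hψd : ∀ t : ℝ, HasDerivAt ψ (⟪gradient h (x + t • u), u⟫ - c - L * ‖u‖ ^ 2 * t) t := by
    intro t
    have h1 : HasDerivAt (fun s : ℝ => h (x + s • u)) ⟪gradient h (x + t • u), u⟫ t :=
      line_deriv h x u t _ (hdiff _).hasGradientAt
    have h2 : HasDerivAt (fun s : ℝ => s * c) c t := by
      simpa using (hasDerivAt_id t).mul_const c
    have h3 : HasDerivAt (fun s : ℝ => L * ‖u‖ ^ 2 * s ^ 2 / 2) (L * ‖u‖ ^ 2 * t) t := by
      have := ((hasDerivAt_pow 2 t).const_mul (L * ‖u‖ ^ 2)).div_const 2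
      exact this.congr_deriv (by push_cast; ring)
    exact (h1.sub h2).sub h3
  have hmono : AntitoneOn ψ (Icc (0:ℝ) 1) := by
    apply antitoneOn_of_hasDerivWithinAt_nonpos (convex_Icc 0 1)
      (fun t _ => (hψd t).continuousAt.continuousWithinAt)
      (fun t _ => (hψd t).hasDerivWithinAt)
    intro t ht
    rw [interior_Icc] at ht
    have key : ⟪gradient h (x + t • u) - gradient h x, u⟫ ≤ L * ‖u‖ ^ 2 * t := by
      calc ⟪gradient h (x + t • u) - gradient h x, u⟫
          ≤ ‖gradient h (x + t • u) - gradient h x‖ * ‖u‖ := real_inner_le_norm _ _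
        _ ≤ (L * ‖x + t • u - x‖) * ‖u‖ := by
            apply mul_le_mul_of_nonneg_right _ (norm_nonneg u)
            exact hsmooth _ _
        _ = L * ‖u‖ ^ 2 * t := by
            have : x + t • u - x = t • u := by abel
            rw [this, norm_smul, Real.norm_eq_abs, abs_of_pos ht.1]
            ring
    have hsplit : ⟪gradient h (x + t • u), u⟫ - c
        = ⟪gradient h (x + t • u) - gradient h x, u⟫ := by
      rw [inner_sub_left, hc]
    linarith [key, hsplit.le, hsplit.ge]
  have h01 := hmono (left_mem_Icc.mpr zero_le_one) (right_mem_Icc.mpr zero_le_one) zero_le_one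
  have hψ0 : ψ 0 = h x := by simp [hψ]
  have hψ1 : ψ 1 = h z - c - L * ‖u‖ ^ 2 / 2 := by
    have hxz : x + (1:ℝ) • u = z := by rw [one_smul, hu]; abel
    rw [hψ]; simp only [hxz, one_pow, mul_one, one_mul]
  rw [hψ0, hψ1] at h01
  rw [hc, hu] at h01
  linarith

/-- Lemma: for a differentiable, `L`-smooth and `μ`-strongly convex function `h` on `ℝ^d`
(with `0 ≤ μ ≤ L`), one has `⟨∇h(x), z − y⟩ ≥ h(z) − h(y) + (μ/4)‖y − z‖² − L‖z − x‖²`. -/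
theorem perturbed_strong_convexity
    {d : ℕ} (h : EuclideanSpace ℝ (Fin d) → ℝ)
    {L μ : ℝ} (hL : 0 < L) (hμ0 : 0 ≤ μ) (hμL : μ ≤ L)
    (hdiff : Differentiable ℝ h)
    (hsmooth : ∀ x y, ‖gradient h x - gradient h y‖ ≤ L * ‖x - y‖)
    (hsc : ConvexOn ℝ Set.univ (fun x => h x - μ / 2 * ‖x‖ ^ 2))
    (x y z : EuclideanSpace ℝ (Fin d)) :
    ⟪gradient h x, z - y⟫ ≥ h z - h y + μ / 4 * ‖y - z‖ ^ 2 - L * ‖z - x‖ ^ 2 := by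
  have hsc1 := sc_ineq h hdiff hsc x y
  have hdes := descent_lemma h hL hdiff hsmooth x z
  have hsplit : ⟪gradient h x, z - y⟫ = ⟪gradient h x, z - x⟫ + ⟪gradient h x, x - y⟫ := by
    rw [← inner_add_right]
    congr 1
    abel
  have hflip : ⟪gradient h x, x - y⟫ = - ⟪gradient h x, y - x⟫ := by
    rw [← inner_neg_right]
    congr 1
    abel
  have htri : ‖y - z‖ ≤ ‖y - x‖ + ‖x - z‖ := by
    have : y - z = (y - x) + (x - z) := by abel
    rw [this]; exact norm_add_le _ _
  have hyx : ‖y - x‖ = ‖x - y‖ := norm_sub_rev y x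
  have hxz : ‖x - z‖ = ‖z - x‖ := norm_sub_rev x z
  have h2 : ‖y - z‖ ^ 2 ≤ (‖y - x‖ + ‖x - z‖) ^ 2 := by
    apply pow_le_pow_left₀ (norm_nonneg _) htri
  have h3 : (‖y - x‖ + ‖x - z‖) ^ 2 ≤ 2 * ‖y - x‖ ^ 2 + 2 * ‖x - z‖ ^ 2 := by
    nlinarith [sq_nonneg (‖y - x‖ - ‖x - z‖)]
  have hμ4 : μ / 4 * ‖y - z‖ ^ 2 ≤ μ / 2 * ‖y - x‖ ^ 2 + L / 2 * ‖x - z‖ ^ 2 := by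
    nlinarith [mul_le_mul_of_nonneg_left (h2.trans h3) (by linarith : (0:ℝ) ≤ μ / 4),
      mul_le_mul_of_nonneg_right hμL (sq_nonneg ‖x - z‖)]
  rw [hxz] at hμ4
  rw [hsplit, hflip]
  linarith [hsc1, hdes, hμ4]
end

section
/- Let M ≥ 2, 1 ≤ S ≤ M and K ≥ 1 be integers, and let x_1,…,x_M ∈ ℝ^d be vectors with mean x̄ = (1/M)·Σ_{i=1}^M x_i and variance ζ² = (1/M)·Σ_{i=1}^M ‖x_i − x̄‖². If π is a permutation of {1,…,M} chosen uniformly at random, then Σ_{m=1}^S Σ_{k=0}^{K−1} E[‖K·Σ_{i=1}^{m−1}(x_{π(i)} − x̄) + k·(x_{π(m)} − x̄)‖²] ≤ (1/2)·S²·K³·ζ². -/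
open Finset RealInnerProductSpace

lemma perm_sum_mul {M : ℕ} (g : Equiv.Perm (Fin M) → ℝ) (σ : Equiv.Perm (Fin M)) :
    ∑ π : Equiv.Perm (Fin M), g (π * σ) = ∑ π : Equiv.Perm (Fin M), g π :=
  Equiv.sum_comp (Equiv.mulRight σ) g

lemma exists_perm_two {M : ℕ} {i j i' j' : Fin M} (hij : i ≠ j) (hij' : i' ≠ j') :
    ∃ σ : Equiv.Perm (Fin M), σ i' = i ∧ σ j' = j := by
  refine ⟨Equiv.swap i i' * Equiv.swap j' (Equiv.swap i i' j), ?_, ?_⟩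
  · have h1 : i' ≠ Equiv.swap i i' j := by
      intro h
      have h2 : Equiv.swap i i' i = i' := Equiv.swap_apply_left i i'
      have := (Equiv.swap i i').injective (h2.trans h)
      exact hij this
    rw [Equiv.Perm.mul_apply, Equiv.swap_apply_of_ne_of_ne hij' h1,
      Equiv.swap_apply_right]
  · rw [Equiv.Perm.mul_apply, Equiv.swap_apply_left, Equiv.swap_apply_self]

lemma S2_eq {d M : ℕ} (c : Fin M → EuclideanSpace ℝ (Fin d)) {i j i' j' : Fin M}
    (hij : i ≠ j) (hij' : i' ≠ j') :
    ∑ π : Equiv.Perm (Fin M), ⟪c (π i), c (π j)⟫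
      = ∑ π : Equiv.Perm (Fin M), ⟪c (π i'), c (π j')⟫ := by
  obtain ⟨σ, hi, hj⟩ := exists_perm_two hij hij'
  calc ∑ π : Equiv.Perm (Fin M), ⟪c (π i), c (π j)⟫
      = ∑ π : Equiv.Perm (Fin M), ⟪c ((π * σ) i'), c ((π * σ) j')⟫ := by
        simp only [Equiv.Perm.mul_apply, hi, hj]
    _ = ∑ π : Equiv.Perm (Fin M), ⟪c (π i'), c (π j')⟫ :=
        perm_sum_mul (fun π => ⟪c (π i'), c (π j')⟫) σ

lemma S1_eq {d M : ℕ} (c : Fin M → EuclideanSpace ℝ (Fin d)) (i j : Fin M) :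
    ∑ π : Equiv.Perm (Fin M), ⟪c (π i), c (π i)⟫
      = ∑ π : Equiv.Perm (Fin M), ⟪c (π j), c (π j)⟫ := by
  have hσ : (Equiv.swap i j) j = i := Equiv.swap_apply_right i j
  calc ∑ π : Equiv.Perm (Fin M), ⟪c (π i), c (π i)⟫
      = ∑ π : Equiv.Perm (Fin M), ⟪c ((π * Equiv.swap i j) j), c ((π * Equiv.swap i j) j)⟫ := by
        simp only [Equiv.Perm.mul_apply, hσ]
    _ = ∑ π : Equiv.Perm (Fin M), ⟪c (π j), c (π j)⟫ :=
        perm_sum_mul (fun π => ⟪c (π j), c (π j)⟫) (Equiv.swap i j)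

lemma sum_ite_lt {β : Type*} [AddCommMonoid β] {M t : ℕ} (h : t ≤ M) (f : Fin M → β) :
    ∑ j : Fin M, (if (j : ℕ) < t then f j else 0) = ∑ i : Fin t, f (Fin.castLE h i) := by
  rw [← Finset.sum_filter]
  have hset : Finset.univ.filter (fun j : Fin M => (j : ℕ) < t)
      = Finset.univ.map (Fin.castLEEmb h) := by
    ext j
    simp only [Finset.mem_filter, Finset.mem_univ, true_and, Finset.mem_map]
    constructor
    · intro hj
      exact ⟨⟨(j : ℕ), hj⟩, by ext; simp⟩
    · rintro ⟨i, rfl⟩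
      simp [Fin.castLEEmb]
  rw [hset, Finset.sum_map]
  rfl

lemma key {d M : ℕ} (hM : 2 ≤ M) (c : Fin M → EuclideanSpace ℝ (Fin d))
    (hc0 : ∑ a, c a = 0) (w : Fin M → ℝ) (hw : ∀ i, 0 ≤ w i) :
    ∑ π : Equiv.Perm (Fin M), ‖∑ j, w j • c (π j)‖ ^ 2 ≤
      (Nat.factorial M : ℝ) * (((M : ℝ)⁻¹ * ∑ a, ‖c a‖ ^ 2) * ∑ j, w j ^ 2) := by
  have hM2 : (2:ℝ) ≤ (M:ℝ) := by exact_mod_cast hM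
  have hM0 : (0:ℝ) < (M:ℝ) := by linarith
  set i0 : Fin M := ⟨0, by omega⟩ with hi0def
  set i1 : Fin M := ⟨1, by omega⟩ with hi1def
  have hi01 : i0 ≠ i1 := by simp [hi0def, hi1def, Fin.ext_iff]
  set A : ℝ := ∑ π : Equiv.Perm (Fin M), ⟪c (π i0), c (π i0)⟫ with hAdef
  set B : ℝ := ∑ π : Equiv.Perm (Fin M), ⟪c (π i0), c (π i1)⟫ with hBdef
  have hAi : ∀ i : Fin M, ∑ π : Equiv.Perm (Fin M), ⟪c (π i), c (π i)⟫ = A :=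
    fun i => S1_eq c i i0
  have hBij : ∀ i j : Fin M, i ≠ j →
      ∑ π : Equiv.Perm (Fin M), ⟪c (π i), c (π j)⟫ = B :=
    fun i j h => S2_eq c h hi01
  have hA0 : 0 ≤ A := Finset.sum_nonneg fun π _ => real_inner_self_nonneg
  have hperm : ∀ π : Equiv.Perm (Fin M),
      ∑ i, ⟪c (π i), c (π i)⟫ = ∑ a, ‖c a‖ ^ 2 := by
    intro π
    simp only [real_inner_self_eq_norm_sq]
    exact Equiv.sum_comp π (fun a => ‖c a‖ ^ 2)
  have hMA : (M:ℝ) * A = (Nat.factorial M : ℝ) * ∑ a, ‖c a‖ ^ 2 := by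
    calc (M:ℝ) * A = ∑ _i : Fin M, A := by
          rw [Finset.sum_const, card_univ, Fintype.card_fin, nsmul_eq_mul]
      _ = ∑ i : Fin M, ∑ π : Equiv.Perm (Fin M), ⟪c (π i), c (π i)⟫ :=
          (Finset.sum_congr rfl fun i _ => (hAi i).symm)
      _ = ∑ π : Equiv.Perm (Fin M), ∑ i, ⟪c (π i), c (π i)⟫ := Finset.sum_comm
      _ = ∑ _π : Equiv.Perm (Fin M), ∑ a, ‖c a‖ ^ 2 :=
          Finset.sum_congr rfl fun π _ => hperm π
      _ = (Nat.factorial M : ℝ) * ∑ a, ‖c a‖ ^ 2 := by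
          rw [Finset.sum_const, card_univ, Fintype.card_perm, Fintype.card_fin, nsmul_eq_mul]
  have hcard : ((univ.erase i0).card : ℝ) = (M:ℝ) - 1 := by
    rw [Finset.card_erase_of_mem (mem_univ _), card_univ, Fintype.card_fin]
    rw [Nat.cast_sub (by omega), Nat.cast_one]
  have hzero : (M:ℝ) * (A + ((M:ℝ) - 1) * B) = 0 := by
    have h0 : ∑ π : Equiv.Perm (Fin M),
        ⟪(∑ i, c (π i)), (∑ j, c (π j))⟫ = (0:ℝ) := by
      refine Finset.sum_eq_zero fun π _ => ?_
      have : ∑ i, c (π i) = 0 := by rw [Equiv.sum_comp π c, hc0]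
      rw [this, inner_zero_left]
    have h1 : ∑ π : Equiv.Perm (Fin M), ⟪(∑ i, c (π i)), (∑ j, c (π j))⟫
        = ∑ i, ∑ j, ∑ π : Equiv.Perm (Fin M), ⟪c (π i), c (π j)⟫ := by
      calc ∑ π : Equiv.Perm (Fin M), ⟪(∑ i, c (π i)), (∑ j, c (π j))⟫
          = ∑ π : Equiv.Perm (Fin M), ∑ i, ∑ j, ⟪c (π i), c (π j)⟫ := by
            refine Finset.sum_congr rfl fun π _ => ?_
            rw [sum_inner]
            exact Finset.sum_congr rfl fun i _ => inner_sum _ _ _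
        _ = ∑ i, ∑ π : Equiv.Perm (Fin M), ∑ j, ⟪c (π i), c (π j)⟫ := Finset.sum_comm
        _ = ∑ i, ∑ j, ∑ π : Equiv.Perm (Fin M), ⟪c (π i), c (π j)⟫ :=
            Finset.sum_congr rfl fun i _ => Finset.sum_comm
    have h2 : ∀ i : Fin M, ∑ j, ∑ π : Equiv.Perm (Fin M), ⟪c (π i), c (π j)⟫
        = A + ((M:ℝ) - 1) * B := by
      intro i
      rw [← Finset.add_sum_erase _ _ (mem_univ i), hAi i]
      congr 1
      rw [Finset.sum_congr rfl fun j hj => hBij i j (Finset.ne_of_mem_erase hj).symm]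
      rw [Finset.sum_const, nsmul_eq_mul]
      congr 1
      rw [Finset.card_erase_of_mem (mem_univ _), card_univ, Fintype.card_fin,
        Nat.cast_sub (by omega), Nat.cast_one]
    rw [h1] at h0
    rw [Finset.sum_congr rfl fun i _ => h2 i, Finset.sum_const, card_univ,
      Fintype.card_fin, nsmul_eq_mul] at h0
    exact h0
  have hB0 : B ≤ 0 := by
    by_contra hB
    push_neg at hB
    have h1 : A + ((M:ℝ) - 1) * B = 0 := by
      rcases mul_eq_zero.mp hzero with h | h
      · linarith
      · exact h
    nlinarith
  -- expansion
  have expand : ∀ π : Equiv.Perm (Fin M),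
      ‖∑ j, w j • c (π j)‖ ^ 2 = ∑ i, ∑ j, w i * w j * ⟪c (π i), c (π j)⟫ := by
    intro π
    rw [← real_inner_self_eq_norm_sq, sum_inner]
    refine Finset.sum_congr rfl fun i _ => ?_
    rw [inner_sum]
    refine Finset.sum_congr rfl fun j _ => ?_
    rw [real_inner_smul_left, real_inner_smul_right]; ring
  set Q : ℝ := ∑ i, ∑ j ∈ univ.erase i, w i * w j with hQdef
  have hQ0 : 0 ≤ Q :=
    Finset.sum_nonneg fun i _ => Finset.sum_nonneg fun j _ => mul_nonneg (hw i) (hw j)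
  have hmain : ∑ π : Equiv.Perm (Fin M), ‖∑ j, w j • c (π j)‖ ^ 2
      = (∑ j, w j ^ 2) * A + Q * B := by
    calc ∑ π : Equiv.Perm (Fin M), ‖∑ j, w j • c (π j)‖ ^ 2
        = ∑ π : Equiv.Perm (Fin M), ∑ i, ∑ j, w i * w j * ⟪c (π i), c (π j)⟫ :=
          Finset.sum_congr rfl fun π _ => expand π
      _ = ∑ i, ∑ j, ∑ π : Equiv.Perm (Fin M), w i * w j * ⟪c (π i), c (π j)⟫ := by
          rw [Finset.sum_comm]
          exact Finset.sum_congr rfl fun i _ => Finset.sum_comm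
      _ = ∑ i, ∑ j, w i * w j * ∑ π : Equiv.Perm (Fin M), ⟪c (π i), c (π j)⟫ := by
          refine Finset.sum_congr rfl fun i _ => Finset.sum_congr rfl fun j _ => ?_
          rw [Finset.mul_sum]
      _ = ∑ i, (w i ^ 2 * A + ∑ j ∈ univ.erase i, w i * w j * B) := by
          refine Finset.sum_congr rfl fun i _ => ?_
          rw [← Finset.add_sum_erase _ _ (mem_univ i), hAi i]
          congr 1
          · ring
          · exact Finset.sum_congr rfl fun j hj => by
              rw [hBij i j (Finset.ne_of_mem_erase hj).symm]
      _ = (∑ j, w j ^ 2) * A + Q * B := by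
          rw [Finset.sum_add_distrib, Finset.sum_mul, hQdef, Finset.sum_mul]
          congr 1
          exact Finset.sum_congr rfl fun i _ => (Finset.sum_mul _ _ _).symm
  rw [hmain]
  have hw2 : 0 ≤ ∑ j, w j ^ 2 := Finset.sum_nonneg fun j _ => sq_nonneg _
  have hAval : A = (M:ℝ)⁻¹ * ((Nat.factorial M : ℝ) * ∑ a, ‖c a‖ ^ 2) := by
    field_simp
    linarith [hMA]
  have : (Nat.factorial M : ℝ) * (((M : ℝ)⁻¹ * ∑ a, ‖c a‖ ^ 2) * ∑ j, w j ^ 2)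
      = (∑ j, w j ^ 2) * A := by rw [hAval]; ring
  rw [this]
  nlinarith [mul_nonpos_of_nonneg_of_nonpos hQ0 hB0]

/-- Technical sampling lemma for SFL: for a uniformly random permutation `π` of `{1, …, M}`,
`Σ_{m=1}^{S} Σ_{k=0}^{K−1} E‖K Σ_{i<m−1} (x_{π i} − x̄) + k (x_{π (m−1)} − x̄)‖² ≤ ½ S² K³ ζ²`,
where `x̄` and `ζ²` are the population mean and variance (clients are `0`-indexed, and the
expectation over the uniform distribution on permutations is written as the average over
all permutations). -/
theorem sfl_sampling_lemma
    {d M : ℕ} (hM : 2 ≤ M) {S K : ℕ} (hS1 : 1 ≤ S) (hSM : S ≤ M) (hK : 1 ≤ K)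
    (x : Fin M → EuclideanSpace ℝ (Fin d))
    (xbar : EuclideanSpace ℝ (Fin d)) (hxbar : xbar = (M : ℝ)⁻¹ • ∑ i : Fin M, x i)
    (ζ : ℝ) (hζ : ζ ^ 2 = (M : ℝ)⁻¹ * ∑ i : Fin M, ‖x i - xbar‖ ^ 2) :
    ∑ m : Fin S, ∑ k ∈ Finset.range K,
        ((Nat.factorial M : ℝ))⁻¹ *
          ∑ π : Equiv.Perm (Fin M),
            ‖(K : ℝ) • (∑ i : Fin m.1, (x (π (Fin.castLE (m.2.le.trans hSM) i)) - xbar))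
              + (k : ℝ) • (x (π (Fin.castLE hSM m)) - xbar)‖ ^ 2 ≤
      1 / 2 * S ^ 2 * K ^ 3 * ζ ^ 2 := by
  have hMR : (0:ℝ) < (M:ℝ) := by
    have : (2:ℝ) ≤ (M:ℝ) := by exact_mod_cast hM
    linarith
  set c : Fin M → EuclideanSpace ℝ (Fin d) := fun i => x i - xbar with hcdef
  have hc : ∀ a, x a - xbar = c a := fun a => rfl
  have hc0 : ∑ a, c a = 0 := by
    have : ∑ a, c a = (∑ a, x a) - (M : ℕ) • xbar := by
      simp only [hcdef]
      rw [Finset.sum_sub_distrib, Finset.sum_const, card_univ, Fintype.card_fin]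
    rw [this, hxbar]
    rw [← Nat.cast_smul_eq_nsmul ℝ, smul_smul, mul_inv_cancel₀ (ne_of_gt hMR), one_smul,
      sub_self]
  have hζ2 : ζ ^ 2 = (M : ℝ)⁻¹ * ∑ a, ‖c a‖ ^ 2 := hζ
  have hζ0 : (0:ℝ) ≤ ζ ^ 2 := by rw [hζ2]; positivity
  have hfac : (0:ℝ) < (Nat.factorial M : ℝ) := by
    exact_mod_cast Nat.factorial_pos M
  -- gauss sums
  have gaussK : ∑ k ∈ Finset.range K, (k:ℝ) = (K:ℝ) * ((K:ℝ) - 1) / 2 := by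
    have h1 : ((∑ i ∈ Finset.range K, i) * 2 : ℕ) = K * (K - 1) :=
      Finset.sum_range_id_mul_two K
    have h2 := congrArg (fun n : ℕ => (n:ℝ)) h1
    push_cast [Nat.cast_sub hK] at h2
    linarith
  have gaussS : ∑ m : Fin S, ((m : ℕ) : ℝ) = (S:ℝ) * ((S:ℝ) - 1) / 2 := by
    rw [Fin.sum_univ_eq_sum_range (fun i => (i:ℝ)) S]
    have h1 : ((∑ i ∈ Finset.range S, i) * 2 : ℕ) = S * (S - 1) :=
      Finset.sum_range_id_mul_two S
    have h2 := congrArg (fun n : ℕ => (n:ℝ)) h1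
    push_cast [Nat.cast_sub hS1] at h2
    linarith
  -- per-term bound
  have hterm : ∀ (m : Fin S), ∀ k ∈ Finset.range K,
      ((Nat.factorial M : ℝ))⁻¹ *
          ∑ π : Equiv.Perm (Fin M),
            ‖(K : ℝ) • (∑ i : Fin m.1, (x (π (Fin.castLE (m.2.le.trans hSM) i)) - xbar))
              + (k : ℝ) • (x (π (Fin.castLE hSM m)) - xbar)‖ ^ 2
        ≤ ζ ^ 2 * (((m : ℕ) : ℝ) * (K:ℝ)^2 + (k:ℝ)^2) := by
    intro m k _hk
    set m' : Fin M := Fin.castLE hSM m with hm'def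
    have hm't : (m' : ℕ) = (m : ℕ) := rfl
    set w : Fin M → ℝ := fun j =>
      (if (j : ℕ) < (m : ℕ) then (K:ℝ) else 0) + (if j = m' then (k:ℝ) else 0) with hwdef
    have hw : ∀ j, 0 ≤ w j := by
      intro j
      apply add_nonneg <;> split <;> positivity
    have hrepr : ∀ π : Equiv.Perm (Fin M),
        (K : ℝ) • (∑ i : Fin m.1, (x (π (Fin.castLE (m.2.le.trans hSM) i)) - xbar))
          + (k : ℝ) • (x (π m') - xbar) = ∑ j, w j • c (π j) := by
      intro π
      simp only [hc]
      rw [show (∑ j : Fin M, w j • c (π j))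
          = (∑ j : Fin M, (if (j : ℕ) < (m : ℕ) then (K:ℝ) else 0) • c (π j))
            + (∑ j : Fin M, (if j = m' then (k:ℝ) else 0) • c (π j)) by
        rw [← Finset.sum_add_distrib]
        exact Finset.sum_congr rfl fun j _ => by rw [hwdef, add_smul]]
      congr 1
      · rw [show (∑ j : Fin M, (if (j : ℕ) < (m : ℕ) then (K:ℝ) else 0) • c (π j))
            = ∑ j : Fin M, (if (j : ℕ) < (m : ℕ) then (K:ℝ) • c (π j) else 0) by
          exact Finset.sum_congr rfl fun j _ => by rw [ite_smul, zero_smul]]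
        rw [sum_ite_lt (m.2.le.trans hSM) (fun j => (K:ℝ) • c (π j)), Finset.smul_sum]
      · rw [show (∑ j : Fin M, (if j = m' then (k:ℝ) else 0) • c (π j))
            = ∑ j : Fin M, (if j = m' then (k:ℝ) • c (π j) else 0) by
          exact Finset.sum_congr rfl fun j _ => by rw [ite_smul, zero_smul]]
        rw [Finset.sum_ite_eq' Finset.univ m' (fun j => (k:ℝ) • c (π j)),
          if_pos (Finset.mem_univ m')]
    have hw2 : ∑ j, w j ^ 2 = ((m : ℕ) : ℝ) * (K:ℝ)^2 + (k:ℝ)^2 := by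
      have hptw : ∀ j, w j ^ 2 =
          (if (j : ℕ) < (m : ℕ) then (K:ℝ)^2 else 0) + (if j = m' then (k:ℝ)^2 else 0) := by
        intro j
        by_cases hj : j = m'
        · subst hj
          have hnlt : ¬ ((m' : ℕ) < (m : ℕ)) := by rw [hm't]; exact lt_irrefl _
          simp [hwdef, hnlt]
        · by_cases hlt : (j : ℕ) < (m : ℕ) <;> simp [hwdef, hj, hlt]
      rw [Finset.sum_congr rfl fun j _ => hptw j, Finset.sum_add_distrib,
        sum_ite_lt (m.2.le.trans hSM) (fun _ => (K:ℝ)^2),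
        Finset.sum_ite_eq' Finset.univ m' (fun _ => (k:ℝ)^2),
        if_pos (Finset.mem_univ m'), Finset.sum_const, card_univ, Fintype.card_fin,
        nsmul_eq_mul]
    calc ((Nat.factorial M : ℝ))⁻¹ *
          ∑ π : Equiv.Perm (Fin M),
            ‖(K : ℝ) • (∑ i : Fin m.1, (x (π (Fin.castLE (m.2.le.trans hSM) i)) - xbar))
              + (k : ℝ) • (x (π m') - xbar)‖ ^ 2
        = ((Nat.factorial M : ℝ))⁻¹ *
          ∑ π : Equiv.Perm (Fin M), ‖∑ j, w j • c (π j)‖ ^ 2 := by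
          congr 1
          exact Finset.sum_congr rfl fun π _ => by rw [hrepr π]
      _ ≤ ((Nat.factorial M : ℝ))⁻¹ *
          ((Nat.factorial M : ℝ) * (((M : ℝ)⁻¹ * ∑ a, ‖c a‖ ^ 2) * ∑ j, w j ^ 2)) := by
          apply mul_le_mul_of_nonneg_left (key hM c hc0 w hw) (le_of_lt (inv_pos.mpr hfac))
      _ = ζ ^ 2 * (((m : ℕ) : ℝ) * (K:ℝ)^2 + (k:ℝ)^2) := by
          rw [← hζ2, hw2, ← mul_assoc, inv_mul_cancel₀ (ne_of_gt hfac), one_mul]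
  -- combine
  have hnum : ∑ m : Fin S, ∑ k ∈ Finset.range K,
      (ζ ^ 2 * (((m : ℕ) : ℝ) * (K:ℝ)^2 + (k:ℝ)^2)) ≤ 1 / 2 * S ^ 2 * K ^ 3 * ζ ^ 2 := by
    have hstep : ∀ m : Fin S, ∑ k ∈ Finset.range K, (((m : ℕ) : ℝ) * (K:ℝ)^2 + (k:ℝ)^2)
        ≤ ((m : ℕ) : ℝ) * (K:ℝ)^3 + (K:ℝ)^2 * ((K:ℝ) - 1) / 2 := by
      intro m
      have h1 : ∑ k ∈ Finset.range K, (((m : ℕ) : ℝ) * (K:ℝ)^2 + (k:ℝ)^2)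
          ≤ ∑ k ∈ Finset.range K, (((m : ℕ) : ℝ) * (K:ℝ)^2 + (k:ℝ) * (K:ℝ)) := by
        refine Finset.sum_le_sum fun k hk => ?_
        have hkK : (k:ℝ) ≤ (K:ℝ) := by
          exact_mod_cast (Finset.mem_range.mp hk).le
        have hk0 : (0:ℝ) ≤ (k:ℝ) := Nat.cast_nonneg k
        nlinarith
      have h2 : ∑ k ∈ Finset.range K, (((m : ℕ) : ℝ) * (K:ℝ)^2 + (k:ℝ) * (K:ℝ))
          = ((m : ℕ) : ℝ) * (K:ℝ)^3 + (K:ℝ)^2 * ((K:ℝ) - 1) / 2 := by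
        rw [Finset.sum_add_distrib, Finset.sum_const, Finset.card_range, nsmul_eq_mul,
          ← Finset.sum_mul, gaussK]
        ring
      linarith
    have h3 : ∑ m : Fin S, ∑ k ∈ Finset.range K, (((m : ℕ) : ℝ) * (K:ℝ)^2 + (k:ℝ)^2)
        ≤ (S:ℝ) * ((S:ℝ) - 1) / 2 * (K:ℝ)^3 + (S:ℝ) * ((K:ℝ)^2 * ((K:ℝ) - 1) / 2) := by
      calc ∑ m : Fin S, ∑ k ∈ Finset.range K, (((m : ℕ) : ℝ) * (K:ℝ)^2 + (k:ℝ)^2)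
          ≤ ∑ m : Fin S, (((m : ℕ) : ℝ) * (K:ℝ)^3 + (K:ℝ)^2 * ((K:ℝ) - 1) / 2) :=
            Finset.sum_le_sum fun m _ => hstep m
        _ = (S:ℝ) * ((S:ℝ) - 1) / 2 * (K:ℝ)^3 + (S:ℝ) * ((K:ℝ)^2 * ((K:ℝ) - 1) / 2) := by
            rw [Finset.sum_add_distrib, ← Finset.sum_mul, gaussS, Finset.sum_const,
              card_univ, Fintype.card_fin, nsmul_eq_mul]
    have hSr : (1:ℝ) ≤ (S:ℝ) := by exact_mod_cast hS1
    have hKr : (1:ℝ) ≤ (K:ℝ) := by exact_mod_cast hK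
    calc ∑ m : Fin S, ∑ k ∈ Finset.range K,
        (ζ ^ 2 * (((m : ℕ) : ℝ) * (K:ℝ)^2 + (k:ℝ)^2))
        = ζ ^ 2 * ∑ m : Fin S, ∑ k ∈ Finset.range K, (((m : ℕ) : ℝ) * (K:ℝ)^2 + (k:ℝ)^2) := by
          rw [Finset.mul_sum]
          exact Finset.sum_congr rfl fun m _ => by rw [Finset.mul_sum]
      _ ≤ ζ ^ 2 * ((S:ℝ) * ((S:ℝ) - 1) / 2 * (K:ℝ)^3 + (S:ℝ) * ((K:ℝ)^2 * ((K:ℝ) - 1) / 2)) :=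
          mul_le_mul_of_nonneg_left h3 hζ0
      _ ≤ 1 / 2 * S ^ 2 * K ^ 3 * ζ ^ 2 := by
          rw [show (1:ℝ) / 2 * S ^ 2 * K ^ 3 * ζ ^ 2
              = ζ ^ 2 * (1 / 2 * S ^ 2 * K ^ 3) by ring]
          apply mul_le_mul_of_nonneg_left _ hζ0
          nlinarith [mul_nonneg (le_trans zero_le_one hSr) (sq_nonneg (K:ℝ))]
  calc ∑ m : Fin S, ∑ k ∈ Finset.range K,
        ((Nat.factorial M : ℝ))⁻¹ *
          ∑ π : Equiv.Perm (Fin M),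
            ‖(K : ℝ) • (∑ i : Fin m.1, (x (π (Fin.castLE (m.2.le.trans hSM) i)) - xbar))
              + (k : ℝ) • (x (π (Fin.castLE hSM m)) - xbar)‖ ^ 2
      ≤ ∑ m : Fin S, ∑ k ∈ Finset.range K,
          (ζ ^ 2 * (((m : ℕ) : ℝ) * (K:ℝ)^2 + (k:ℝ)^2)) :=
        Finset.sum_le_sum fun m _ => Finset.sum_le_sum fun k hk => hterm m k hk
    _ ≤ 1 / 2 * S ^ 2 * K ^ 3 * ζ ^ 2 := hnum
end

section
/- Let T ≥ 0 be an integer, let {r_t}_{t=0}^{T+1} and {s_t}_{t=0}^{T} be nonnegative real sequences, and let b > 0, c ≥ 0 and 0 < a ≤ d be reals. Suppose γ is a constant with 0 < γ ≤ 1/d and aγ < 1, that T + 1 ≥ 1/(2aγ), and that r_{t+1} ≤ (1 − aγ)·r_t − bγ·s_t + cγ² for all 0 ≤ t ≤ T. Then, setting w_t = (1 − aγ)^{−(t+1)} and W_T = Σ_{t=0}^T w_t, one has (b/W_T)·Σ_{t=0}^T w_t·s_t ≤ 3a·r_0·(1 − aγ)^{T+1} + cγ ≤ 3a·r_0·exp(−aγ(T+1))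 + cγ. -/
/-- Linear-convergence learning-rate tuning lemma: if `r_{t+1} ≤ (1 − aγ) r_t − bγ s_t + cγ²`
for all `0 ≤ t ≤ T`, with `0 < γ ≤ 1/d`, `aγ < 1`, `0 < a ≤ d` and `T + 1 ≥ 1/(2aγ)`, then
for the weights `w_t = (1 − aγ)^{−(t+1)}`,
`(b/W_T) Σ_{t=0}^T w_t s_t ≤ 3 a r_0 (1 − aγ)^{T+1} + cγ ≤ 3 a r_0 exp(−aγ(T+1)) + cγ`. -/
theorem tuning_linear_rate
    {T : ℕ} (r s : ℕ → ℝ)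
    (hr : ∀ t, t ≤ T + 1 → 0 ≤ r t) (hs : ∀ t, t ≤ T → 0 ≤ s t)
    {a b c d γ : ℝ} (hb : 0 < b) (hc : 0 ≤ c) (ha : 0 < a) (had : a ≤ d)
    (hγ0 : 0 < γ) (hγd : γ ≤ 1 / d) (haγ : a * γ < 1)
    (hT : (1 : ℝ) / (2 * (a * γ)) ≤ (T : ℝ) + 1)
    (hrec : ∀ t, t ≤ T → r (t + 1) ≤ (1 - a * γ) * r t - b * γ * s t + c * γ ^ 2)
    (w : ℕ → ℝ) (hw : ∀ t, w t = ((1 - a * γ) ^ (t + 1))⁻¹) :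
    b / (∑ t ∈ Finset.range (T + 1), w t) *
        ∑ t ∈ Finset.range (T + 1), w t * s t ≤
      3 * a * r 0 * (1 - a * γ) ^ (T + 1) + c * γ ∧
    3 * a * r 0 * (1 - a * γ) ^ (T + 1) + c * γ ≤
      3 * a * r 0 * Real.exp (-(a * γ * ((T : ℝ) + 1))) + c * γ := by
  have haγ0 : 0 < a * γ := mul_pos ha hγ0
  have hρ0 : 0 < 1 - a * γ := by linarith
  set ρ : ℝ := 1 - a * γ with hρ
  have hρpow : ∀ n : ℕ, (0:ℝ) < ρ ^ n := fun n => pow_pos hρ0 n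
  have hwpos : ∀ t, 0 < w t := fun t => by rw [hw]; exact inv_pos.mpr (hρpow _)
  set W := ∑ t ∈ Finset.range (T + 1), w t with hW
  set S := ∑ t ∈ Finset.range (T + 1), w t * s t with hS
  have hWpos : 0 < W := Finset.sum_pos (fun t _ => hwpos t) ⟨0, by simp⟩
  have hr0 : 0 ≤ r 0 := hr 0 (by omega)
  -- telescoping bound
  have key : b * γ * S ≤ r 0 + c * γ ^ 2 * W := by
    have h1 : ∀ t ∈ Finset.range (T + 1),
        b * γ * (w t * s t) ≤
          ((ρ ^ t)⁻¹ * r t - (ρ ^ (t + 1))⁻¹ * r (t + 1)) + c * γ ^ 2 * w t := by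
      intro t ht
      rw [Finset.mem_range] at ht
      have ht' : t ≤ T := Nat.lt_succ_iff.mp ht
      have hrec' := hrec t ht'
      have hu : (0:ℝ) ≤ (ρ ^ (t + 1))⁻¹ := (inv_pos.mpr (hρpow _)).le
      have hmul := mul_le_mul_of_nonneg_left hrec' hu
      have huv : (ρ ^ (t + 1))⁻¹ * ρ = (ρ ^ t)⁻¹ := by
        rw [pow_succ]
        field_simp
      have hrw : (ρ ^ (t + 1))⁻¹ * (ρ * r t - b * γ * s t + c * γ ^ 2)
          = (ρ ^ t)⁻¹ * r t - b * γ * ((ρ ^ (t + 1))⁻¹ * s t)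
            + c * γ ^ 2 * (ρ ^ (t + 1))⁻¹ := by
        rw [← huv]; ring
      rw [hrw] at hmul
      rw [hw t]
      linarith
    have h2 := Finset.sum_le_sum h1
    rw [Finset.sum_add_distrib, Finset.sum_range_sub' (fun i => (ρ ^ i)⁻¹ * r i)] at h2
    have hlast : 0 ≤ (ρ ^ (T + 1))⁻¹ * r (T + 1) :=
      mul_nonneg (inv_pos.mpr (hρpow _)).le (hr (T + 1) le_rfl)
    have hmulsum : ∑ t ∈ Finset.range (T + 1), c * γ ^ 2 * w t = c * γ ^ 2 * W := by
      rw [hW, Finset.mul_sum]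
    calc b * γ * S = ∑ t ∈ Finset.range (T + 1), b * γ * (w t * s t) := by
          rw [hS, Finset.mul_sum]
      _ ≤ ((ρ ^ 0)⁻¹ * r 0 - (ρ ^ (T + 1))⁻¹ * r (T + 1)) +
            ∑ t ∈ Finset.range (T + 1), c * γ ^ 2 * w t := h2
      _ ≤ r 0 + c * γ ^ 2 * W := by rw [hmulsum, pow_zero, inv_one, one_mul]; linarith
  -- geometric identity: a γ ρ^{T+1} W = 1 - ρ^{T+1}
  have hgeo : a * γ * (ρ ^ (T + 1) * W) = 1 - ρ ^ (T + 1) := by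
    have hterm : ∀ t ∈ Finset.range (T + 1), ρ ^ (T + 1) * w t = ρ ^ (T - t) := by
      intro t ht
      rw [Finset.mem_range] at ht
      have ht' : t ≤ T := Nat.lt_succ_iff.mp ht
      rw [hw t]
      have : ρ ^ (T + 1) = ρ ^ (T - t) * ρ ^ (t + 1) := by
        rw [← pow_add]
        congr 1
        omega
      rw [this, mul_assoc, mul_inv_cancel₀ (hρpow (t + 1)).ne', mul_one]
    have hsum : ρ ^ (T + 1) * W = ∑ k ∈ Finset.range (T + 1), ρ ^ k := by
      rw [hW, Finset.mul_sum, Finset.sum_congr rfl hterm]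
      rw [← Finset.sum_range_reflect (fun k => ρ ^ k) (T + 1)]
      apply Finset.sum_congr rfl
      intro t ht
      rw [Finset.mem_range] at ht
      congr 1
    have hg := geom_sum_mul ρ (T + 1)
    rw [hsum]
    have haρ : a * γ = 1 - ρ := by rw [hρ]; ring
    linear_combination (∑ k ∈ Finset.range (T + 1), ρ ^ k) * haρ - hg
  -- exponential bounds
  have hexp1 : ρ ≤ Real.exp (-(a * γ)) := by
    have := Real.add_one_le_exp (-(a * γ))
    rw [hρ]; linarith
  have hρTexp : ρ ^ (T + 1) ≤ Real.exp (-(a * γ * ((T : ℝ) + 1))) := by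
    calc ρ ^ (T + 1) ≤ Real.exp (-(a * γ)) ^ (T + 1) :=
          pow_le_pow_left₀ hρ0.le hexp1 _
      _ = Real.exp (-(a * γ * ((T : ℝ) + 1))) := by
          rw [← Real.exp_nat_mul]
          congr 1
          push_cast
          ring
  have hhalf : (1:ℝ) / 2 ≤ a * γ * ((T : ℝ) + 1) := by
    rw [div_le_iff₀ (by positivity)] at hT
    nlinarith
  have hexph : Real.exp (-(a * γ * ((T : ℝ) + 1))) ≤ Real.exp (-(1/2 : ℝ)) :=
    Real.exp_le_exp.mpr (by linarith)
  have hexp23 : Real.exp (-(1/2 : ℝ)) ≤ 2/3 := by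
    rw [Real.exp_neg]
    have h32 : (3:ℝ)/2 ≤ Real.exp (1/2) := by
      have := Real.add_one_le_exp (1/2 : ℝ)
      linarith
    rw [inv_le_comm₀ (Real.exp_pos _) (by norm_num)]
    calc (2/3 : ℝ)⁻¹ = 3/2 := by norm_num
      _ ≤ Real.exp (1/2) := h32
  have hρT : ρ ^ (T + 1) ≤ 2/3 := le_trans hρTexp (le_trans hexph hexp23)
  constructor
  · -- first inequality
    have hW1 : 1 ≤ 3 * (a * γ * (ρ ^ (T + 1) * W)) := by rw [hgeo]; linarith
    have hr0W : r 0 ≤ 3 * a * r 0 * ρ ^ (T + 1) * γ * W := by nlinarith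
    rw [div_mul_eq_mul_div, div_le_iff₀ hWpos]
    have h3 : γ * (b * S) ≤ γ * ((3 * a * r 0 * ρ ^ (T + 1) + c * γ) * W) := by
      calc γ * (b * S) = b * γ * S := by ring
        _ ≤ r 0 + c * γ ^ 2 * W := key
        _ ≤ 3 * a * r 0 * ρ ^ (T + 1) * γ * W + c * γ ^ 2 * W := by linarith
        _ = γ * ((3 * a * r 0 * ρ ^ (T + 1) + c * γ) * W) := by ring
    exact le_of_mul_le_mul_left h3 hγ0
  · have h4 := mul_le_mul_of_nonneg_left hρTexp (by positivity : (0:ℝ) ≤ 3 * a * r 0)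
    linarith
end

section
/- Let T ≥ 0 be an integer, let {r_t}_{t=0}^{T+1} and {s_t}_{t=0}^{T} be nonnegative real sequences, and let b > 0, c₁ > 0, c₂ > 0, d > 0 and r_0 > 0 be reals. Set γ = min{ (r_0/(c₁(T+1)))^{1/2}, (r_0/(c₂(T+1)))^{1/3}, 1/d }. If r_{t+1} ≤ r_t − bγ·s_t + c₁γ² + c₂γ³ for all 0 ≤ t ≤ T, then (b/(T+1))·Σ_{t=0}^T s_t ≤ 2·(c₁·r_0/(T+1))^{1/2} + 2·c₂^{1/3}·(r_0/(T+1))^{2/3} + d·r_0/(T+1). -/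
/-- Sublinear learning-rate tuning lemma: if `r_{t+1} ≤ r_t − bγ s_t + c₁γ² + c₂γ³` for
all `0 ≤ t ≤ T` with the tuned learning rate
`γ = min{(r₀/(c₁(T+1)))^{1/2}, (r₀/(c₂(T+1)))^{1/3}, 1/d}`, then
`(b/(T+1)) Σ_{t=0}^T s_t ≤ 2 (c₁ r₀/(T+1))^{1/2} + 2 c₂^{1/3} (r₀/(T+1))^{2/3} + d r₀/(T+1)`. -/
theorem tuning_sublinear_rate
    {T : ℕ} (r s : ℕ → ℝ)
    (hr : ∀ t, t ≤ T + 1 → 0 ≤ r t) (hs : ∀ t, t ≤ T → 0 ≤ s t)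
    {b c₁ c₂ d γ : ℝ} (hb : 0 < b) (hc₁ : 0 < c₁) (hc₂ : 0 < c₂) (hd : 0 < d)
    (hr0 : 0 < r 0)
    (hγ : γ = min ((r 0 / (c₁ * ((T : ℝ) + 1))) ^ ((1 : ℝ) / 2))
      (min ((r 0 / (c₂ * ((T : ℝ) + 1))) ^ ((1 : ℝ) / 3)) (1 / d)))
    (hrec : ∀ t, t ≤ T → r (t + 1) ≤ r t - b * γ * s t + c₁ * γ ^ 2 + c₂ * γ ^ 3) :
    b / ((T : ℝ) + 1) * ∑ t ∈ Finset.range (T + 1), s t ≤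
      2 * (c₁ * r 0 / ((T : ℝ) + 1)) ^ ((1 : ℝ) / 2)
      + 2 * c₂ ^ ((1 : ℝ) / 3) * (r 0 / ((T : ℝ) + 1)) ^ ((2 : ℝ) / 3)
      + d * r 0 / ((T : ℝ) + 1) := by
  set N : ℝ := (T : ℝ) + 1 with hNdef
  have hN : (0:ℝ) < N := by positivity
  set a : ℝ := r 0 with hadef
  set x : ℝ := a / (c₁ * N) with hxdef
  set y : ℝ := a / (c₂ * N) with hydef
  have hx : 0 < x := by positivity
  have hy : 0 < y := by positivity
  set A : ℝ := x ^ ((1:ℝ)/2) with hAdef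
  set B : ℝ := y ^ ((1:ℝ)/3) with hBdef
  have hA : 0 < A := Real.rpow_pos_of_pos hx _
  have hB : 0 < B := Real.rpow_pos_of_pos hy _
  have hγpos : 0 < γ := by
    rw [hγ]; exact lt_min hA (lt_min hB (by positivity))
  have hγA : γ ≤ A := by rw [hγ]; exact min_le_left _ _
  have hγB : γ ≤ B := by rw [hγ]; exact (min_le_right _ _).trans (min_le_left _ _)
  -- key rpow identities
  have hax : a / N = c₁ * x := by rw [hxdef]; field_simp
  have hay : a / N = c₂ * y := by rw [hydef]; field_simp
  have h1 : c₁ * A = (c₁ * a / N) ^ ((1:ℝ)/2) := by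
    have : c₁ * a / N = c₁ ^ 2 * x := by rw [hxdef]; field_simp
    rw [this, Real.mul_rpow (by positivity) hx.le, ← Real.rpow_natCast c₁ 2,
      ← Real.rpow_mul hc₁.le]
    norm_num [hAdef]
  have h2 : c₂ * B ^ 2 = c₂ ^ ((1:ℝ)/3) * (a / N) ^ ((2:ℝ)/3) := by
    rw [hay, Real.mul_rpow hc₂.le hy.le, hBdef, ← Real.rpow_natCast (y ^ ((1:ℝ)/3)) 2,
      ← Real.rpow_mul hy.le, ← mul_assoc, ← Real.rpow_add hc₂]
    norm_num
  have h3 : a / N * (1 / A) = (c₁ * a / N) ^ ((1:ℝ)/2) := by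
    rw [← h1, hax, hAdef, mul_one_div, mul_div_assoc]
    congr 1
    rw [div_eq_iff (by positivity), ← Real.rpow_add hx]
    norm_num
  have h4 : a / N * (1 / B) = c₂ ^ ((1:ℝ)/3) * (a / N) ^ ((2:ℝ)/3) := by
    rw [← h2, hay, hBdef, mul_one_div, mul_div_assoc]
    congr 1
    rw [div_eq_iff (by positivity), ← Real.rpow_natCast (y ^ ((1:ℝ)/3)) 2,
      ← Real.rpow_mul hy.le, ← Real.rpow_add hy]
    norm_num
  -- telescoping
  have key : b * γ * ∑ t ∈ Finset.range (T + 1), s t ≤ a + N * (c₁ * γ ^ 2 + c₂ * γ ^ 3) := by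
    have step : ∀ t ∈ Finset.range (T + 1),
        b * γ * s t ≤ (r t - r (t + 1)) + (c₁ * γ ^ 2 + c₂ * γ ^ 3) := by
      intro t ht
      have := hrec t (Nat.lt_succ_iff.mp (Finset.mem_range.mp ht))
      linarith
    calc b * γ * ∑ t ∈ Finset.range (T + 1), s t
        = ∑ t ∈ Finset.range (T + 1), b * γ * s t := by rw [Finset.mul_sum]
      _ ≤ ∑ t ∈ Finset.range (T + 1), ((r t - r (t + 1)) + (c₁ * γ ^ 2 + c₂ * γ ^ 3)) :=
          Finset.sum_le_sum step
      _ = (r 0 - r (T + 1)) + N * (c₁ * γ ^ 2 + c₂ * γ ^ 3) := by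
          rw [Finset.sum_add_distrib, Finset.sum_range_sub', Finset.sum_const,
            Finset.card_range, hNdef]
          push_cast; ring
      _ ≤ a + N * (c₁ * γ ^ 2 + c₂ * γ ^ 3) := by
          have := hr (T + 1) le_rfl
          simp only [hadef]; linarith
  have hsum : 0 ≤ ∑ t ∈ Finset.range (T + 1), s t :=
    Finset.sum_nonneg fun t ht => hs t (Nat.lt_succ_iff.mp (Finset.mem_range.mp ht))
  -- divide by N γ
  have main : b / N * ∑ t ∈ Finset.range (T + 1), s t ≤
      a / N * (1 / γ) + c₁ * γ + c₂ * γ ^ 2 := by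
    have hNγ : 0 < N * γ := by positivity
    have heq : b / N * ∑ t ∈ Finset.range (T + 1), s t
        = (b * γ * ∑ t ∈ Finset.range (T + 1), s t) / (N * γ) := by
      field_simp
    rw [heq, div_le_iff₀ hNγ]
    have h5 : (a / N * (1 / γ) + c₁ * γ + c₂ * γ ^ 2) * (N * γ)
        = a + N * (c₁ * γ ^ 2 + c₂ * γ ^ 3) := by
      field_simp; ring
    rw [h5]; exact key
  -- bound 1/γ
  have hinv : 1 / γ ≤ 1 / A + 1 / B + d := by
    rcases le_total A (min B (1 / d)) with h | h
    · have hγA' : γ = A := by rw [hγ, min_eq_left h]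
      rw [hγA']
      have : (0:ℝ) < 1 / B := by positivity
      linarith
    · have hγ' : γ = min B (1 / d) := by rw [hγ, min_eq_right h]
      rcases le_total B (1 / d) with h2' | h2'
      · have : γ = B := by rw [hγ', min_eq_left h2']
        rw [this]
        have : (0:ℝ) < 1 / A := by positivity
        linarith
      · have : γ = 1 / d := by rw [hγ', min_eq_right h2']
        rw [this, one_div_one_div]
        have h1 : (0:ℝ) < 1 / A := by positivity
        have h2 : (0:ℝ) < 1 / B := by positivity
        linarith
  have haN : 0 < a / N := by positivity
  have hb1 : a / N * (1 / γ) ≤ a / N * (1 / A + 1 / B + d) :=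
    mul_le_mul_of_nonneg_left hinv haN.le
  have hb2 : c₁ * γ ≤ c₁ * A := mul_le_mul_of_nonneg_left hγA hc₁.le
  have hb3 : c₂ * γ ^ 2 ≤ c₂ * B ^ 2 := by
    have : γ ^ 2 ≤ B ^ 2 := pow_le_pow_left₀ hγpos.le hγB 2
    exact mul_le_mul_of_nonneg_left this hc₂.le
  have expand : a / N * (1 / A + 1 / B + d)
      = (c₁ * a / N) ^ ((1:ℝ)/2) + c₂ ^ ((1:ℝ)/3) * (a / N) ^ ((2:ℝ)/3) + d * a / N := by
    rw [mul_add, mul_add, h3, h4]; ring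
  calc b / N * ∑ t ∈ Finset.range (T + 1), s t
      ≤ a / N * (1 / γ) + c₁ * γ + c₂ * γ ^ 2 := main
    _ ≤ a / N * (1 / A + 1 / B + d) + c₁ * A + c₂ * B ^ 2 := by linarith
    _ = 2 * (c₁ * a / N) ^ ((1:ℝ)/2) + 2 * c₂ ^ ((1:ℝ)/3) * (a / N) ^ ((2:ℝ)/3) + d * a / N := by
        rw [expand, h1, h2]; ring
end
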